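/- For integers k ≥ 1 let ξ_k = k^{−1/2}, let θ_k ∈ (0,π) be defined by cos θ_k = (cos(ξ_k − ξ_{k+1}) + 1)/2, fix a ∈ (−π/2, π/2), let t_k(a) = 1/cos(a − Σ_{i=k}^∞ θ_i) and p_k = (t_k(a) cos ξ_k, t_k(a) sin ξ_k, t_k(a)), defined for all k ≥ k₀(a) where a − Σ_{i=k}^∞ θ_i ∈ (−π/2, π/2). Then the total length of the polygonal line through the p_k is finite and equals Σ_{k=k₀(a)}^∞ ‖p_{k+1} − p_k‖ = √2 · sin(Σ_{i=k₀(a)}^∞ θ_i) / ( cos(a − Σ_{i=k₀(a)}^∞ θ_i) · cos a ). -/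

import Mathlib

open Real Filter Topology

noncomputable section

private lemma aux_trig' (b θ : ℝ) :
    Real.cos (b + θ) ^ 2 + Real.cos b ^ 2
      - 2 * Real.cos θ * Real.cos b * Real.cos (b + θ) = Real.sin θ ^ 2 := by
  have h1 := Real.sin_sq_add_cos_sq b
  have h2 := Real.sin_sq_add_cos_sq (b + θ)
  have hc : Real.cos θ = Real.cos (b + θ) * Real.cos b + Real.sin (b + θ) * Real.sin b := by
    rw [← Real.cos_sub]; ring_nf
  have hs : Real.sin θ = Real.sin (b + θ) * Real.cos b - Real.cos (b + θ) * Real.sin b := by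
    rw [← Real.sin_sub]; ring_nf
  rw [hc, hs]
  linear_combination (-(Real.cos (b + θ))^2) * h1 + (-(Real.cos b)^2) * h2

private lemma seg_formula' (b b' x x' θ : ℝ)
    (hb : b ∈ Set.Ioo (-(π/2)) (π/2)) (hb' : b' ∈ Set.Ioo (-(π/2)) (π/2))
    (hbb : b' = b + θ) (hθm : θ ∈ Set.Ioo 0 π)
    (hcos : Real.cos θ = (Real.cos (x - x') + 1) / 2) :
    Real.sqrt ((1 / Real.cos b' * Real.cos x' - 1 / Real.cos b * Real.cos x) ^ 2
        + (1 / Real.cos b' * Real.sin x' - 1 / Real.cos b * Real.sin x) ^ 2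
        + (1 / Real.cos b' - 1 / Real.cos b) ^ 2)
      = Real.sqrt 2 * (Real.tan b' - Real.tan b) := by
  have hcb : 0 < Real.cos b := Real.cos_pos_of_mem_Ioo hb
  have hcb' : 0 < Real.cos b' := Real.cos_pos_of_mem_Ioo hb'
  have hsθ : 0 ≤ Real.sin θ := Real.sin_nonneg_of_nonneg_of_le_pi hθm.1.le hθm.2.le
  have htrig := aux_trig' b θ
  rw [← hbb] at htrig
  have px := Real.sin_sq_add_cos_sq x
  have px' := Real.sin_sq_add_cos_sq x'
  rw [Real.cos_sub] at hcos
  have hid : (1 / Real.cos b' * Real.cos x' - 1 / Real.cos b * Real.cos x) ^ 2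
        + (1 / Real.cos b' * Real.sin x' - 1 / Real.cos b * Real.sin x) ^ 2
        + (1 / Real.cos b' - 1 / Real.cos b) ^ 2
      = 2 * (Real.cos b' ^ 2 + Real.cos b ^ 2
          - 2 * Real.cos θ * Real.cos b * Real.cos b') / (Real.cos b ^ 2 * Real.cos b' ^ 2) := by
    field_simp
    linear_combination (Real.cos b' ^ 2) * px
      + (Real.cos b ^ 2) * px'
      + (4 * Real.cos b * Real.cos b') * hcos
  have hid2 : (1 / Real.cos b' * Real.cos x' - 1 / Real.cos b * Real.cos x) ^ 2
        + (1 / Real.cos b' * Real.sin x' - 1 / Real.cos b * Real.sin x) ^ 2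
        + (1 / Real.cos b' - 1 / Real.cos b) ^ 2
      = 2 * (Real.sin θ / (Real.cos b * Real.cos b')) ^ 2 := by
    rw [hid, htrig, div_pow, mul_pow, mul_div_assoc]
  rw [hid2]
  have hX : 0 ≤ Real.sin θ / (Real.cos b * Real.cos b') := by positivity
  rw [Real.sqrt_mul (by norm_num : (0:ℝ) ≤ 2), Real.sqrt_sq hX]
  have htan : Real.tan b' - Real.tan b = Real.sin θ / (Real.cos b * Real.cos b') := by
    have hd : b' - b = θ := by rw [hbb]; ring
    have hs : Real.sin θ = Real.sin b' * Real.cos b - Real.cos b' * Real.sin b := by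
      rw [← hd, Real.sin_sub]
    rw [Real.tan_eq_sin_div_cos, Real.tan_eq_sin_div_cos, hs,
      div_sub_div _ _ (ne_of_gt hcb') (ne_of_gt hcb), mul_comm (Real.cos b') (Real.cos b)]
  rw [htan]

private lemma theta_bound' (θ d : ℝ) (hθm : θ ∈ Set.Ioo 0 π) (hd : 0 ≤ d)
    (hcos : Real.cos θ = (Real.cos d + 1) / 2) : θ ≤ 2 * d := by
  have h1 : Real.sin (θ / 2) ^ 2 = (1 - Real.cos θ) / 2 := by
    have := Real.sin_sq_eq_half_sub (θ / 2)
    rw [show 2 * (θ / 2) = θ by ring] at this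
    linarith
  have h2 : Real.sin (d / 2) ^ 2 = (1 - Real.cos d) / 2 := by
    have := Real.sin_sq_eq_half_sub (d / 2)
    rw [show 2 * (d / 2) = d by ring] at this
    linarith
  have h3 : Real.sin (θ / 2) ^ 2 ≤ (d / 2) ^ 2 := by
    have hsd : Real.sin (d / 2) ≤ d / 2 := by
      rcases eq_or_lt_of_le hd with h | h
      · simp [← h]
      · exact (Real.sin_lt (by linarith)).le
    have hsd2 : Real.sin (d / 2) ^ 2 ≤ (d / 2) ^ 2 := by
      rcases le_or_gt 0 (Real.sin (d / 2)) with h | h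
      · nlinarith
      · have hdpi : π < d / 2 := by
          by_contra hle
          push_neg at hle
          exact absurd (Real.sin_nonneg_of_nonneg_of_le_pi (by linarith) hle) (not_le.2 h)
        nlinarith [Real.neg_one_le_sin (d/2), Real.sin_le_one (d/2), Real.pi_gt_three]
    nlinarith [hcos, h1, h2]
  have hsnn : 0 ≤ Real.sin (θ / 2) :=
    Real.sin_nonneg_of_nonneg_of_le_pi (by linarith [hθm.1]) (by linarith [hθm.2, Real.pi_pos])
  have h4 : Real.sin (θ / 2) ≤ d / 2 := by nlinarith
  have h5 : 2 / π * (θ / 2) ≤ Real.sin (θ / 2) :=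
    Real.mul_le_sin (by linarith [hθm.1]) (by linarith [hθm.2])
  have hπ4 := Real.pi_le_four
  have hπ := Real.pi_pos
  have h6 : θ / π ≤ d / 2 := by
    calc θ / π = 2 / π * (θ / 2) := by field_simp
    _ ≤ Real.sin (θ / 2) := h5
    _ ≤ d / 2 := h4
  have : θ ≤ π * (d / 2) := by
    rw [div_le_iff₀ hπ] at h6; linarith [h6]
  nlinarith

/-- For `a ∈ (−π/2, π/2)` the polygonal line through the points `p_k`, `k ≥ k₀(a)`, has
finite total length, equal to
`√2 · sin(∑_{i=k₀}^∞ θ_i) / (cos(a − ∑_{i=k₀}^∞ θ_i) · cos a)`. -/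
theorem stmt_11 (ξ θ : ℕ → ℝ)
    (hξ : ∀ k : ℕ, ξ k = (k : ℝ) ^ (-(1 : ℝ) / 2))
    (hθmem : ∀ k : ℕ, 1 ≤ k → θ k ∈ Set.Ioo 0 π)
    (hθ : ∀ k : ℕ, 1 ≤ k → Real.cos (θ k) = (Real.cos (ξ k - ξ (k + 1)) + 1) / 2)
    (a : ℝ) (ha : a ∈ Set.Ioo (-(π / 2)) (π / 2))
    (k₀ : ℕ) (hk₀ : 1 ≤ k₀)
    (hk₀a : ∀ k : ℕ, k₀ ≤ k → (a - ∑' i : ℕ, θ (k + i)) ∈ Set.Ioo (-(π / 2)) (π / 2))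
    (t : ℕ → ℝ) (ht : ∀ k : ℕ, t k = 1 / Real.cos (a - ∑' i : ℕ, θ (k + i)))
    (p : ℕ → EuclideanSpace ℝ (Fin 3))
    (hp : ∀ k : ℕ, p k 0 = t k * Real.cos (ξ k) ∧ p k 1 = t k * Real.sin (ξ k) ∧
      p k 2 = t k) :
    (Summable fun i : ℕ => ‖p (k₀ + i + 1) - p (k₀ + i)‖) ∧
      (∑' i : ℕ, ‖p (k₀ + i + 1) - p (k₀ + i)‖) =
        Real.sqrt 2 * Real.sin (∑' i : ℕ, θ (k₀ + i)) /
          (Real.cos (a - ∑' i : ℕ, θ (k₀ + i)) * Real.cos a) := by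
  -- basic facts about ξ
  have hξnn : ∀ k : ℕ, 0 ≤ ξ k := fun k => by
    rw [hξ]; exact Real.rpow_nonneg (Nat.cast_nonneg k) _
  have hξmono : ∀ k : ℕ, 1 ≤ k → ξ (k + 1) ≤ ξ k := by
    intro k hk
    rw [hξ, hξ]
    apply Real.rpow_le_rpow_of_nonpos
    · exact_mod_cast Nat.pos_of_ne_zero (by omega)
    · exact_mod_cast Nat.le_succ k
    · norm_num
  -- θ k ≤ 2 (ξ k - ξ (k+1))
  have hθle : ∀ k : ℕ, 1 ≤ k → θ k ≤ 2 * (ξ k - ξ (k + 1)) := by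
    intro k hk
    exact theta_bound' (θ k) (ξ k - ξ (k + 1)) (hθmem k hk)
      (by linarith [hξmono k hk]) (hθ k hk)
  -- summability of the tail of θ
  have hsum0 : Summable fun i : ℕ => θ (k₀ + i) := by
    apply summable_of_sum_range_le (c := 2 * ξ k₀)
    · intro n
      exact (hθmem (k₀ + n) (by omega)).1.le
    · intro n
      calc ∑ i ∈ Finset.range n, θ (k₀ + i)
          ≤ ∑ i ∈ Finset.range n, 2 * (ξ (k₀ + i) - ξ (k₀ + i + 1)) :=
            Finset.sum_le_sum fun i _ => hθle (k₀ + i) (by omega)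
        _ = 2 * ∑ i ∈ Finset.range n, (ξ (k₀ + i) - ξ (k₀ + (i + 1))) := by
            rw [Finset.mul_sum]
            exact Finset.sum_congr rfl fun i _ => by rw [Nat.add_assoc]
        _ = 2 * (ξ (k₀ + 0) - ξ (k₀ + n)) := by
            rw [Finset.sum_range_sub' (fun i => ξ (k₀ + i)) n]
        _ ≤ 2 * ξ k₀ := by
            have := hξnn (k₀ + n); simp only [Nat.add_zero]; linarith
  have hsum : ∀ k : ℕ, k₀ ≤ k → Summable fun i : ℕ => θ (k + i) := by
    intro k hk
    obtain ⟨m, rfl⟩ := Nat.exists_eq_add_of_le hk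
    exact ((summable_nat_add_iff m).2 hsum0).congr fun i => by congr 1; omega
  -- recursion for tails
  have hrec : ∀ k : ℕ, k₀ ≤ k →
      (∑' i : ℕ, θ (k + i)) = θ k + ∑' i : ℕ, θ (k + 1 + i) := by
    intro k hk
    rw [Summable.tsum_eq_zero_add (hsum k hk), Nat.add_zero]
    congr 1
    exact tsum_congr fun i => by rw [show k + (i + 1) = k + 1 + i from by omega]
  have hSnn : ∀ k : ℕ, k₀ ≤ k → 0 ≤ ∑' i : ℕ, θ (k + i) :=
    fun k hk => tsum_nonneg fun i => (hθmem (k + i) (by omega)).1.le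
  have hSpos : ∀ k : ℕ, k₀ ≤ k → 0 < ∑' i : ℕ, θ (k + i) := by
    intro k hk
    rw [hrec k hk]
    have h1 := (hθmem k (by omega)).1
    have h2 := hSnn (k + 1) (by omega)
    linarith
  -- the key distance formula
  have key : ∀ k : ℕ, k₀ ≤ k → ‖p (k + 1) - p k‖
      = Real.sqrt 2 * (Real.tan (a - ∑' i : ℕ, θ (k + 1 + i))
        - Real.tan (a - ∑' i : ℕ, θ (k + i))) := by
    intro k hk
    obtain ⟨h0, h1, h2⟩ := hp k
    obtain ⟨h0', h1', h2'⟩ := hp (k + 1)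
    have hnorm : ‖p (k + 1) - p k‖ = Real.sqrt (((p (k+1) - p k) 0) ^ 2
        + ((p (k+1) - p k) 1) ^ 2 + ((p (k+1) - p k) 2) ^ 2) := by
      rw [EuclideanSpace.norm_eq]
      congr 1
      rw [Fin.sum_univ_three]
      simp [Real.norm_eq_abs, sq_abs]
    have e0 : (p (k+1) - p k) 0 = t (k+1) * Real.cos (ξ (k+1)) - t k * Real.cos (ξ k) := by
      simp [h0, h0']
    have e1 : (p (k+1) - p k) 1 = t (k+1) * Real.sin (ξ (k+1)) - t k * Real.sin (ξ k) := by
      simp [h1, h1']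
    have e2 : (p (k+1) - p k) 2 = t (k+1) - t k := by
      simp [h2, h2']
    rw [hnorm, e0, e1, e2, ht k, ht (k+1)]
    exact seg_formula' (a - ∑' i : ℕ, θ (k + i)) (a - ∑' i : ℕ, θ (k + 1 + i))
      (ξ k) (ξ (k + 1)) (θ k)
      (hk₀a k hk) (hk₀a (k + 1) (by omega))
      (by have := hrec k hk; linarith)
      (hθmem k (by omega)) (hθ k (by omega))
  -- partial sums telescope
  have hps : ∀ n : ℕ, ∑ i ∈ Finset.range n, ‖p (k₀ + i + 1) - p (k₀ + i)‖
      = Real.sqrt 2 * Real.tan (a - ∑' j : ℕ, θ (k₀ + n + j))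
        - Real.sqrt 2 * Real.tan (a - ∑' j : ℕ, θ (k₀ + 0 + j)) := by
    intro n
    rw [← Finset.sum_range_sub (fun i => Real.sqrt 2 * Real.tan (a - ∑' j : ℕ, θ (k₀ + i + j))) n]
    apply Finset.sum_congr rfl
    intro i _
    rw [key (k₀ + i) (by omega), mul_sub]
    have he : (∑' j : ℕ, θ (k₀ + i + 1 + j)) = ∑' j : ℕ, θ (k₀ + (i + 1) + j) :=
      tsum_congr fun j => by rw [show k₀ + i + 1 + j = k₀ + (i + 1) + j from by omega]
    rw [he]
  -- tan (b k) < tan a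
  have hca : 0 < Real.cos a := Real.cos_pos_of_mem_Ioo ha
  have htanlt : ∀ k : ℕ, k₀ ≤ k → Real.tan (a - ∑' i : ℕ, θ (k + i)) < Real.tan a := by
    intro k hk
    exact Real.tan_lt_tan_of_lt_of_lt_pi_div_two (hk₀a k hk).1 ha.2
      (by linarith [hSpos k hk])
  -- summability
  have hsummable : Summable fun i : ℕ => ‖p (k₀ + i + 1) - p (k₀ + i)‖ := by
    apply summable_of_sum_range_le
      (c := Real.sqrt 2 * Real.tan a - Real.sqrt 2 * Real.tan (a - ∑' j : ℕ, θ (k₀ + 0 + j)))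
    · intro n; exact norm_nonneg _
    · intro n
      rw [hps n]
      have h1 := (htanlt (k₀ + n) (by omega)).le
      have h2 := Real.sqrt_nonneg 2
      nlinarith
  refine ⟨hsummable, ?_⟩
  -- limit of partial sums
  have hb_tendsto : Tendsto (fun n : ℕ => a - ∑' i : ℕ, θ (k₀ + n + i)) atTop (𝓝 a) := by
    have h0 : Tendsto (fun n : ℕ => ∑' i : ℕ, θ (k₀ + n + i)) atTop (𝓝 0) := by
      refine (tendsto_sum_nat_add (fun i => θ (k₀ + i))).congr fun n => ?_
      exact tsum_congr fun i => by congr 1; omega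
    simpa using tendsto_const_nhds.sub h0
  have htan_tendsto : Tendsto (fun n : ℕ => Real.tan (a - ∑' i : ℕ, θ (k₀ + n + i)))
      atTop (𝓝 (Real.tan a)) := by
    exact ((Real.continuousAt_tan.2 (ne_of_gt hca)).tendsto.comp hb_tendsto)
  have hlim2 : Tendsto (fun n : ℕ => ∑ i ∈ Finset.range n, ‖p (k₀ + i + 1) - p (k₀ + i)‖)
      atTop (𝓝 (Real.sqrt 2 * Real.tan a
        - Real.sqrt 2 * Real.tan (a - ∑' j : ℕ, θ (k₀ + 0 + j)))) := by
    refine Tendsto.congr (fun n => (hps n).symm) ?_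
    exact (htan_tendsto.const_mul (Real.sqrt 2)).sub_const _
  have hval := tendsto_nhds_unique hsummable.hasSum.tendsto_sum_nat hlim2
  rw [hval]
  -- final algebraic identity
  have hS0 : (∑' j : ℕ, θ (k₀ + 0 + j)) = ∑' i : ℕ, θ (k₀ + i) :=
    tsum_congr fun i => by rw [show k₀ + 0 + i = k₀ + i from by omega]
  rw [hS0]
  have hcb : 0 < Real.cos (a - ∑' i : ℕ, θ (k₀ + i)) :=
    Real.cos_pos_of_mem_Ioo (hk₀a k₀ le_rfl)
  have hs := Real.sin_sub a (a - ∑' i : ℕ, θ (k₀ + i))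
  rw [show a - (a - ∑' i : ℕ, θ (k₀ + i)) = ∑' i : ℕ, θ (k₀ + i) from by ring] at hs
  rw [Real.tan_eq_sin_div_cos, Real.tan_eq_sin_div_cos, hs]
  field_simp
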